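/- For every p ∈ (0,1), every n ∈ ℕ and every 0 ≤ i ≤ n, it holds that w_n^i(p) = (1/p)·(1 − ∑_{j=0}^{i} C(n+1,j) p^j (1−p)^{n+1−j}). -/

import Mathlib

open Finset

private lemma key (p : ℝ) (i : ℕ) : ∀ n, i ≤ n →
    p * (∑ j ∈ Finset.Icc i n, (j.choose i : ℝ) * p ^ i * (1 - p) ^ (j - i)) =
    ∑ j ∈ Finset.Icc (i+1) (n+1), ((n+1).choose j : ℝ) * p ^ j * (1 - p) ^ (n + 1 - j) := by
  refine Nat.le_induction ?_ ?_
  · simp [pow_succ, mul_comm]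
  · intro n hn ih
    rw [(Finset.insert_Icc_right_eq_Icc_add_one (show i ≤ n+1 by omega)).symm, Finset.sum_insert (by simp), mul_add, ih]
    -- RHS side manipulation
    have hpascal : ∀ j ∈ Finset.Icc (i+1) (n+2),
        ((n+2).choose j : ℝ) * p ^ j * (1 - p) ^ (n + 2 - j)
        = ((n+1).choose j : ℝ) * p ^ j * (1 - p) ^ (n + 2 - j)
          + ((n+1).choose (j-1) : ℝ) * p ^ j * (1 - p) ^ (n + 2 - j) := by
      intro j hj
      simp only [Finset.mem_Icc] at hj
      obtain ⟨k, rfl⟩ : ∃ k, j = k + 1 := ⟨j - 1, by omega⟩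
      rw [Nat.choose_succ_succ' (n+1) k]
      push_cast
      ring_nf
    rw [show n + 1 + 1 = n + 2 from rfl, Finset.sum_congr rfl hpascal, Finset.sum_add_distrib]
    have hA : ∑ j ∈ Finset.Icc (i+1) (n+2), ((n+1).choose j : ℝ) * p ^ j * (1 - p) ^ (n + 2 - j)
        = (1 - p) * ∑ j ∈ Finset.Icc (i+1) (n+1), ((n+1).choose j : ℝ) * p ^ j * (1 - p) ^ (n + 1 - j) := by
      rw [(show insert (n+2) (Finset.Icc (i+1) (n+1)) = Finset.Icc (i+1) (n+2) from Finset.insert_Icc_right_eq_Icc_add_one (show i+1 ≤ (n+1)+1 by omega)).symm, Finset.sum_insert (by simp)]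
      have h0 : ((n+1).choose (n+2) : ℝ) = 0 := by norm_cast; exact Nat.choose_succ_self (n+1)
      rw [h0, Finset.mul_sum]
      simp only [zero_mul, zero_add]
      refine Finset.sum_congr rfl fun j hj => ?_
      simp only [Finset.mem_Icc] at hj
      have : n + 2 - j = (n + 1 - j) + 1 := by omega
      rw [this, pow_succ]
      ring
    have hB : ∑ j ∈ Finset.Icc (i+1) (n+2), ((n+1).choose (j-1) : ℝ) * p ^ j * (1 - p) ^ (n + 2 - j)
        = p * ∑ k ∈ Finset.Icc i (n+1), ((n+1).choose k : ℝ) * p ^ k * (1 - p) ^ (n + 1 - k) := by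
      rw [show Finset.Icc (i+1) (n+2) = (Finset.Icc i (n+1)).map (addRightEmbedding 1) from
        (Finset.map_add_right_Icc i (n+1) 1).symm, Finset.sum_map, Finset.mul_sum]
      refine Finset.sum_congr rfl fun k hk => ?_
      simp only [Finset.mem_Icc] at hk
      simp only [addRightEmbedding_apply, Nat.add_sub_cancel]
      have : n + 2 - (k + 1) = n + 1 - k := by omega
      rw [this, pow_succ]
      ring
    rw [hA, hB]
    have hsplit : ∑ k ∈ Finset.Icc i (n+1), ((n+1).choose k : ℝ) * p ^ k * (1 - p) ^ (n + 1 - k)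
        = ((n+1).choose i : ℝ) * p ^ i * (1 - p) ^ (n + 1 - i)
          + ∑ j ∈ Finset.Icc (i+1) (n+1), ((n+1).choose j : ℝ) * p ^ j * (1 - p) ^ (n + 1 - j) := by
      rw [← Finset.insert_Icc_add_one_left_eq_Icc (show i ≤ n+1 by omega), Finset.sum_insert (by simp)]
    rw [hsplit]
    ring

/-- The weight `w_n^i(p) = ∑_{j=i}^n C(j,i) p^i (1-p)^{j-i}`. -/
noncomputable def weightW (p : ℝ) (n i : ℕ) : ℝ :=
  ∑ j ∈ Finset.Icc i n, (j.choose i : ℝ) * p ^ i * (1 - p) ^ (j - i)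

theorem weightW_eq (p : ℝ) (hp0 : 0 < p) (hp1 : p < 1) (n i : ℕ) (hin : i ≤ n) :
    weightW p n i =
      (1 / p) * (1 - ∑ j ∈ Finset.range (i + 1),
        ((n + 1).choose j : ℝ) * p ^ j * (1 - p) ^ (n + 1 - j)) := by
  have hp : p ≠ 0 := ne_of_gt hp0
  have hkey := key p i n hin
  have htot : ∑ j ∈ Finset.range (n+2), ((n+1).choose j : ℝ) * p^j * (1-p)^(n+1-j) = 1 := by
    have h := add_pow p (1-p) (n+1)
    have h1 : p + (1-p) = 1 := by ring
    rw [h1, one_pow] at h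
    calc ∑ j ∈ Finset.range (n+2), ((n+1).choose j : ℝ) * p^j * (1-p)^(n+1-j)
        = ∑ k ∈ Finset.range (n+1+1), p^k * (1-p)^(n+1-k) * ((n+1).choose k : ℝ) :=
          Finset.sum_congr rfl (fun k _ => by ring)
      _ = 1 := h.symm
  have hsplit : ∑ j ∈ Finset.range (i+1), ((n+1).choose j : ℝ) * p^j * (1-p)^(n+1-j)
      + ∑ j ∈ Finset.Icc (i+1) (n+1), ((n+1).choose j : ℝ) * p^j * (1-p)^(n+1-j)
      = ∑ j ∈ Finset.range (n+2), ((n+1).choose j : ℝ) * p^j * (1-p)^(n+1-j) := by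
    rw [Finset.range_eq_Ico, Finset.range_eq_Ico, ← Finset.Ico_add_one_right_eq_Icc]
    exact Finset.sum_Ico_consecutive (fun j => ((n+1).choose j : ℝ) * p^j * (1-p)^(n+1-j)) (m := 0) (n := i+1) (k := n+2) (Nat.zero_le _) (by omega)
  have h2 : (1:ℝ) - ∑ j ∈ Finset.range (i+1), ((n+1).choose j : ℝ) * p^j * (1-p)^(n+1-j)
      = ∑ j ∈ Finset.Icc (i+1) (n+1), ((n+1).choose j : ℝ) * p^j * (1-p)^(n+1-j) := by
    linarith [htot, hsplit]
  rw [h2, ← hkey, weightW]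
  field_simp
  exact Finset.sum_congr rfl fun x _ => by ring
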